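/- For every natural number f ≥ 1, (2f+1)²/(f+1)² < 4 − 2/(f+1) − f!²/(2f)!, i.e., the expected number of cluster-sending steps of Pcs (geometric with success probability ((f+1)/(2f+1))²) is strictly less than the expected number of steps PT(2f+1,f,f) of Plcs, when all clusters have n = 2f+1 replicas of which f are faulty. -/
import Mathlib


open Nat

lemma aux_fact (f : ℕ) (hf : 1 ≤ f) : ((f)! * (f + 1)) ^ 2 < (2 * f + 1) * (2 * f)! := by
  induction f with
  | zero => omega
  | succ n ih =>
    rcases Nat.eq_or_lt_of_le hf with h | h
    · simp [← h]
    · have hn : 1 ≤ n := by omega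
      have ihn := ih hn
      have e1 : ((n + 1)! * (n + 1 + 1)) ^ 2
          = ((n)! * (n + 1)) ^ 2 * (n + 2) ^ 2 := by
        rw [Nat.factorial_succ]; ring
      have e2 : (2 * (n + 1) + 1) * (2 * (n + 1))!
          = ((2 * n + 1) * (2 * n)!) * ((2 * n + 2) * (2 * n + 3)) := by
        have : 2 * (n + 1) = 2 * n + 1 + 1 := by ring
        rw [this, Nat.factorial_succ, Nat.factorial_succ]; ring
      rw [e1, e2]
      have h2 : (n + 2) ^ 2 < (2 * n + 2) * (2 * n + 3) := by nlinarith
      have hpos : 0 < ((n)! * (n + 1)) ^ 2 := by positivity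
      calc ((n)! * (n + 1)) ^ 2 * (n + 2) ^ 2
          < ((2 * n + 1) * (2 * n)!) * (n + 2) ^ 2 :=
            Nat.mul_lt_mul_of_lt_of_le ihn (le_refl _) (by positivity)
        _ ≤ ((2 * n + 1) * (2 * n)!) * ((2 * n + 2) * (2 * n + 3)) :=
            Nat.mul_le_mul_left _ h2.le

/-- For `f ≥ 1`, the expected number of steps of Pcs, `(2f+1)²/(f+1)²`, is strictly
less than the expected number of steps of Plcs, `4 − 2/(f+1) − f!²/(2f)!`. -/
theorem stmt_17 (f : ℕ) (hf : 1 ≤ f) :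
    ((2 * (f : ℚ) + 1) ^ 2) / (((f : ℚ) + 1) ^ 2)
      < 4 - 2 / ((f : ℚ) + 1) - (f ! : ℚ) ^ 2 / ((2 * f)! : ℚ) := by
  have hx : (0 : ℚ) < (f : ℚ) + 1 := by positivity
  have hfac : (0 : ℚ) < ((2 * f)! : ℚ) := by exact_mod_cast Nat.factorial_pos _
  have key : ((f)! : ℚ) ^ 2 * (((f : ℚ) + 1)) ^ 2 < (2 * (f : ℚ) + 1) * ((2 * f)! : ℚ) := by
    have h' : ((((f)! * (f + 1)) ^ 2 : ℕ) : ℚ) < (((2 * f + 1) * (2 * f)! : ℕ) : ℚ) := by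
      exact_mod_cast aux_fact f hf
    push_cast at h'
    nlinarith [h']
  have h1 : (f ! : ℚ) ^ 2 / ((2 * f)! : ℚ) < (2 * (f : ℚ) + 1) / (((f : ℚ) + 1) ^ 2) := by
    rw [div_lt_div_iff₀ hfac (by positivity)]
    linarith [key]
  have h2 : 4 - 2 / ((f : ℚ) + 1) - ((2 * (f : ℚ) + 1) ^ 2) / (((f : ℚ) + 1) ^ 2)
      = (2 * (f : ℚ) + 1) / (((f : ℚ) + 1) ^ 2) := by
    field_simp
    ring
  linarith [h1, h2]
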